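/- Let φ(u) := (e^{-u}(-2+4u-u²) + e^{-2u}(4-4u-u²) - 2e^{-3u})/(1-e^{-u})³ for u > 0. Then φ is integrable on (0,∞) and ∫₀^∞ φ(u) du = 1. -/

import Mathlib

open MeasureTheory

/-- The radial profile `φ` of the truncated pair correlation. -/
noncomputable def phi (u : ℝ) : ℝ :=
  (Real.exp (-u) * (-2 + 4*u - u^2) + Real.exp (-2*u) * (4 - 4*u - u^2)
    - 2 * Real.exp (-3*u)) / (1 - Real.exp (-u))^3

open Real Set Filter Topology
set_option maxHeartbeats 1000000

lemma exp_neg_lt_one {u : ℝ} (hu : 0 < u) : Real.exp (-u) < 1 :=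
  Real.exp_lt_one_iff.mpr (by linarith)

lemma one_sub_exp_neg_ne {u : ℝ} (hu : 0 < u) : 1 - Real.exp (-u) ≠ 0 :=
  sub_ne_zero.mpr (exp_neg_lt_one hu).ne'

lemma exp_neg_two (u : ℝ) : Real.exp (-2*u) = Real.exp (-u) * Real.exp (-u) := by
  rw [← Real.exp_add]; ring_nf

lemma exp_neg_three (u : ℝ) : Real.exp (-3*u) = Real.exp (-u) * Real.exp (-u) * Real.exp (-u) := by
  rw [← Real.exp_add, ← Real.exp_add]; ring_nf

/-- `phi` rewritten with `y = e^u - 1`. -/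
lemma phi_eq {u : ℝ} (hu : 0 < u) :
    phi u = (-2*u^2 + (4*u - 3*u^2) * (Real.exp u - 1)
      + (-2 + 4*u - u^2) * (Real.exp u - 1)^2) / (Real.exp u - 1)^3 := by
  have h1 : Real.exp u ≠ 0 := (Real.exp_pos u).ne'
  have h2 : Real.exp u - 1 ≠ 0 := by
    have := Real.add_one_le_exp u; intro h; nlinarith
  have hne : 1 - Real.exp (-u) ≠ 0 := one_sub_exp_neg_ne hu
  have hinv : Real.exp (-u) = (Real.exp u)⁻¹ := Real.exp_neg u
  unfold phi
  rw [exp_neg_two, exp_neg_three, hinv]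
  field_simp
  ring

lemma phi_continuousOn : ContinuousOn phi (Set.Ioi 0) := by
  apply ContinuousOn.div
  · fun_prop
  · fun_prop
  · intro u hu
    exact pow_ne_zero 3 (one_sub_exp_neg_ne hu)

lemma phi_bound_small {u : ℝ} (hu : 0 < u) (hu1 : u ≤ 1) : |phi u| ≤ 14 := by
  set r : ℝ := Real.exp u - 1 - u with hr_def
  have hy : Real.exp u - 1 = u + r := by ring
  have hr0 : 0 ≤ r := by
    have := Real.add_one_le_exp u; simp only [hr_def]; linarith
  have hr2 : r ≤ u ^ 2 := by
    have h := Real.abs_exp_sub_one_sub_id_le (x := u) (by rw [abs_of_pos hu]; exact hu1)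
    calc r ≤ |Real.exp u - 1 - u| := le_abs_self _
    _ ≤ u ^ 2 := h
  have hypos : 0 < Real.exp u - 1 := by rw [hy]; positivity
  rw [phi_eq hu, abs_div, abs_of_pos (by positivity : (0:ℝ) < (Real.exp u - 1)^3)]
  rw [div_le_iff₀ (by positivity)]
  have hN : -2*u^2 + (4*u - 3*u^2) * (Real.exp u - 1) + (-2 + 4*u - u^2) * (Real.exp u - 1)^2
      = u^3 - u^4 + r*(5*u^2 - 2*u^3) + r^2*(-2 + 4*u - u^2) := by
    rw [hy]; ring
  rw [hN]
  have hcube : u^3 ≤ (Real.exp u - 1)^3 := by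
    apply pow_le_pow_left₀ hu.le; rw [hy]; linarith
  have hr4 : r^2 ≤ u^4 := by nlinarith
  have hq1 : 0 ≤ r*(5*u^2 - 2*u^3) := mul_nonneg hr0 (by nlinarith)
  have hq2 : r*(5*u^2 - 2*u^3) ≤ 5*u^3 := by nlinarith
  have habs : |u^3 - u^4 + r*(5*u^2 - 2*u^3) + r^2*(-2 + 4*u - u^2)| ≤ 14 * u^3 := by
    rw [abs_le]
    constructor <;> nlinarith [sq_nonneg r, sq_nonneg u]
  calc |u^3 - u^4 + r*(5*u^2 - 2*u^3) + r^2*(-2 + 4*u - u^2)| ≤ 14 * u^3 := habs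
  _ ≤ 14 * (Real.exp u - 1)^3 := by linarith

lemma phi_bound_large {u : ℝ} (hu : 1 ≤ u) : |phi u| ≤ 5184 * Real.exp (-(2/3)*u) := by
  have hu0 : 0 < u := lt_of_lt_of_le one_pos hu
  have hx : Real.exp (-u) ≤ Real.exp (-1) := Real.exp_le_exp.mpr (by linarith)
  have h2e : (2:ℝ) ≤ Real.exp 1 := by have := Real.add_one_le_exp 1; linarith
  have hxe : Real.exp (-u) ≤ 1/2 := by
    calc Real.exp (-u) ≤ Real.exp (-1) := hx
    _ = (Real.exp 1)⁻¹ := Real.exp_neg 1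
    _ ≤ (2:ℝ)⁻¹ := inv_anti₀ two_pos h2e
    _ = 1/2 := by norm_num
  have hx0 : 0 < Real.exp (-u) := Real.exp_pos _
  have h12 : (1:ℝ)/2 ≤ 1 - Real.exp (-u) := by linarith
  have hd : (1:ℝ)/8 ≤ (1 - Real.exp (-u))^3 := by
    calc (1:ℝ)/8 = (1/2)^3 := by norm_num
    _ ≤ (1 - Real.exp (-u))^3 := by
        apply pow_le_pow_left₀ (by norm_num) h12

  -- bound numerator
  have hu6 : u ≤ 6 * Real.exp (u/6) := by
    have := Real.add_one_le_exp (u/6); nlinarith [Real.exp_pos (u/6)]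
  have hu2 : u^2 ≤ 36 * Real.exp (u/3) := by
    have h := mul_le_mul hu6 hu6 hu0.le (by positivity)
    calc u^2 = u*u := sq u
    _ ≤ (6 * Real.exp (u/6)) * (6 * Real.exp (u/6)) := h
    _ = 36 * (Real.exp (u/6) * Real.exp (u/6)) := by ring
    _ = 36 * Real.exp (u/3) := by rw [← Real.exp_add]; rw [show u/6+u/6 = u/3 by ring]
  set x : ℝ := Real.exp (-u) with hx_def
  have hx1 : x ≤ 1 := by linarith
  have hxx : x*x ≤ x := by nlinarith
  have hxxx : x*x*x ≤ x := by nlinarith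
  have hu2' : (1:ℝ) ≤ u^2 := by nlinarith
  have h1 : |x * (-2 + 4*u - u^2)| ≤ 7*u^2*x := by
    rw [abs_mul, abs_of_pos hx0]
    have hA : |(-2 + 4*u - u^2)| ≤ 7*u^2 := by
      rw [abs_le]; constructor <;> nlinarith
    calc x * |(-2 + 4*u - u^2)| ≤ x * (7*u^2) := by
          exact mul_le_mul_of_nonneg_left hA hx0.le
    _ = 7*u^2*x := by ring
  have h2 : |x*x * (4 - 4*u - u^2)| ≤ 9*u^2*x := by
    rw [abs_mul, abs_of_pos (mul_pos hx0 hx0)]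
    have hB : |(4 - 4*u - u^2)| ≤ 9*u^2 := by
      rw [abs_le]; constructor <;> nlinarith
    calc x*x * |(4 - 4*u - u^2)| ≤ x*x * (9*u^2) := by
          exact mul_le_mul_of_nonneg_left hB (by positivity)
    _ ≤ x * (9*u^2) := by nlinarith
    _ = 9*u^2*x := by ring
  have h3 : |2 * (x*x*x)| ≤ 2*u^2*x := by
    rw [abs_mul, abs_of_pos (by positivity : (0:ℝ) < x*x*x)]
    have : |(2:ℝ)| = 2 := by norm_num
    rw [this]
    nlinarith
  have hnum : |x * (-2 + 4*u - u^2) + Real.exp (-2*u) * (4 - 4*u - u^2)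
      - 2 * Real.exp (-3*u)| ≤ 18 * u^2 * x := by
    rw [exp_neg_two, exp_neg_three, ← hx_def]
    calc |x * (-2 + 4*u - u^2) + x*x * (4 - 4*u - u^2) - 2 * (x*x*x)|
        = |x * (-2 + 4*u - u^2) + x*x * (4 - 4*u - u^2) + -(2 * (x*x*x))| := by
          rw [sub_eq_add_neg]
    _ ≤ |x * (-2 + 4*u - u^2)| + |x*x * (4 - 4*u - u^2)| + |-(2 * (x*x*x))| :=
          abs_add_three _ _ _
    _ = |x * (-2 + 4*u - u^2)| + |x*x * (4 - 4*u - u^2)| + |2 * (x*x*x)| := by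
          rw [abs_neg]
    _ ≤ 7*u^2*x + 9*u^2*x + 2*u^2*x := by linarith
    _ = 18 * u^2 * x := by ring
  have key : 18 * u^2 * x ≤ 648 * Real.exp (-(2/3)*u) := by
    have h' : u^2 * x ≤ 36 * (Real.exp (u/3) * x) :=
      mul_le_mul_of_nonneg_right hu2 hx0.le |>.trans_eq (by ring)
    calc 18 * u^2 * x ≤ 18 * (36 * (Real.exp (u/3) * x)) := by linarith
    _ = 648 * (Real.exp (u/3) * Real.exp (-u)) := by rw [hx_def]; ring
    _ = 648 * Real.exp (-(2/3)*u) := by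
          rw [← Real.exp_add, show u/3 + -u = -(2/3)*u by ring]
  unfold phi
  rw [abs_div, abs_of_pos (by nlinarith : (0:ℝ) < (1 - Real.exp (-u))^3)]
  rw [div_le_iff₀ (by nlinarith)]
  have hmul := mul_le_mul_of_nonneg_left hd (Real.exp_pos (-(2/3)*u)).le
  calc |Real.exp (-u) * (-2 + 4*u - u^2) + Real.exp (-2*u) * (4 - 4*u - u^2)
      - 2 * Real.exp (-3*u)| ≤ 18 * u^2 * x := by
        rw [show Real.exp (-u) * (-2 + 4*u - u^2) = x * (-2 + 4*u - u^2) from rfl]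
        exact hnum
  _ ≤ 648 * Real.exp (-(2/3)*u) := key
  _ ≤ 5184 * Real.exp (-(2/3)*u) * (1 - Real.exp (-u))^3 := by nlinarith [hmul]


lemma phi_measurable : Measurable phi := by
  unfold phi; fun_prop

/-- `phi` is integrable on `(0, ∞)`. -/
lemma phi_integrable : IntegrableOn phi (Set.Ioi 0) := by
  have hsplit : Set.Ioc (0:ℝ) 1 ∪ Set.Ioi 1 = Set.Ioi 0 := Set.Ioc_union_Ioi_eq_Ioi zero_le_one
  rw [← hsplit]
  apply MeasureTheory.IntegrableOn.union
  · apply Measure.integrableOn_of_bounded (M := 14) measure_Ioc_lt_top.ne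
    · exact (phi_measurable.aestronglyMeasurable)
    · filter_upwards [ae_restrict_mem measurableSet_Ioc] with u hu
      exact phi_bound_small hu.1 hu.2
  · apply Integrable.mono' (g := fun u => 5184 * Real.exp (-(2/3)*u))
    · exact (exp_neg_integrableOn_Ioi 1 (by norm_num : (0:ℝ) < 2/3)).const_mul 5184
    · exact phi_measurable.aestronglyMeasurable.restrict
    · filter_upwards [ae_restrict_mem measurableSet_Ioi] with u hu
      exact phi_bound_large hu.le

/-- The antiderivative of `phi`, extended by its limit `-1` at `0`. -/
noncomputable def Fg (u : ℝ) : ℝ :=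
  if u ≤ 0 then -1
  else ((u^2 - 2*u) * Real.exp (-u) + 2*u * Real.exp (-2*u)) / (1 - Real.exp (-u))^2

lemma Fg_eq {u : ℝ} (hu : 0 < u) :
    Fg u = ((u^2 - 2*u) * Real.exp (-u) + 2*u * Real.exp (-2*u)) / (1 - Real.exp (-u))^2 := by
  simp [Fg, not_le.mpr hu]

lemma hasDerivAt_M (u : ℝ) :
    HasDerivAt (fun v : ℝ => (v - 2) * Real.exp (-v) + 2 * Real.exp (-2*v))
      ((3 - u) * Real.exp (-u) - 4 * Real.exp (-2*u)) u := by
  have he : HasDerivAt (fun v : ℝ => Real.exp (-v)) (-Real.exp (-u)) u := by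
    simpa using (hasDerivAt_neg u).exp
  have hlin2 : HasDerivAt (fun v : ℝ => -2*v) (-2) u := by
    simpa using (hasDerivAt_id u).const_mul (-2 : ℝ)
  have he2 : HasDerivAt (fun v : ℝ => Real.exp (-2*v)) (Real.exp (-2*u) * -2) u := hlin2.exp
  have h1 : HasDerivAt (fun v : ℝ => (v - 2) * Real.exp (-v))
      (1 * Real.exp (-u) + (u - 2) * (-Real.exp (-u))) u :=
    ((hasDerivAt_id u).sub_const 2).mul he
  have := h1.add (he2.const_mul 2)
  exact this.congr_deriv (by ring)

lemma hasDerivAt_E (u : ℝ) :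
    HasDerivAt (fun v : ℝ => 1 - Real.exp (-v)) (Real.exp (-u)) u := by
  have he : HasDerivAt (fun v : ℝ => Real.exp (-v)) (-Real.exp (-u)) u := by
    simpa using (hasDerivAt_neg u).exp
  exact ((hasDerivAt_const u (1:ℝ)).sub he).congr_deriv (by ring)

lemma hasDerivAt_Fg {u : ℝ} (hu : 0 < u) : HasDerivAt Fg (phi u) u := by
  have hD : (1 - Real.exp (-u))^2 ≠ 0 := pow_ne_zero _ (one_sub_exp_neg_ne hu)
  have he : HasDerivAt (fun v : ℝ => Real.exp (-v)) (-Real.exp (-u)) u := by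
    simpa using (hasDerivAt_neg u).exp
  have hlin2 : HasDerivAt (fun v : ℝ => -2*v) (-2) u := by
    simpa using (hasDerivAt_id u).const_mul (-2 : ℝ)
  have he2 : HasDerivAt (fun v : ℝ => Real.exp (-2*v)) (Real.exp (-2*u) * -2) u := hlin2.exp
  have hpoly : HasDerivAt (fun v : ℝ => v^2 - 2*v) (2*u - 2) u := by
    have h1 : HasDerivAt (fun v : ℝ => v^2) (2*u) u := by
      simpa using hasDerivAt_pow 2 u
    have h2 : HasDerivAt (fun v : ℝ => 2*v) 2 u := by
      simpa using (hasDerivAt_id u).const_mul (2:ℝ)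
    exact h1.sub h2
  have hlin : HasDerivAt (fun v : ℝ => 2*v) 2 u := by
    simpa using (hasDerivAt_id u).const_mul (2:ℝ)
  have hN : HasDerivAt (fun v : ℝ => (v^2 - 2*v) * Real.exp (-v) + 2*v * Real.exp (-2*v))
      ((2*u - 2) * Real.exp (-u) + (u^2 - 2*u) * (-Real.exp (-u))
        + (2 * Real.exp (-2*u) + 2*u * (Real.exp (-2*u) * -2))) u :=
    (hpoly.mul he).add (hlin.mul he2)
  have hDd : HasDerivAt (fun v : ℝ => (1 - Real.exp (-v))^2)
      (2 * (1 - Real.exp (-u)) * Real.exp (-u)) u := by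
    have := (hasDerivAt_E u).pow 2
    exact this.congr_deriv (by ring)
  have hdiv := hN.div hDd hD
  have heq : (((2*u - 2) * Real.exp (-u) + (u^2 - 2*u) * (-Real.exp (-u))
        + (2 * Real.exp (-2*u) + 2*u * (Real.exp (-2*u) * -2))) * (1 - Real.exp (-u))^2
      - ((u^2 - 2*u) * Real.exp (-u) + 2*u * Real.exp (-2*u))
        * (2 * (1 - Real.exp (-u)) * Real.exp (-u))) / ((1 - Real.exp (-u))^2)^2
      = phi u := by
    unfold phi
    have hne : 1 - Real.exp (-u) ≠ 0 := one_sub_exp_neg_ne hu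
    rw [exp_neg_two, exp_neg_three]
    field_simp
    ring
  rw [heq] at hdiv
  apply hdiv.congr_of_eventuallyEq
  filter_upwards [Ioi_mem_nhds hu] with v hv
  exact Fg_eq hv

lemma Fg_tendsto_atTop : Tendsto Fg atTop (𝓝 0) := by
  have hx : Tendsto (fun u : ℝ => Real.exp (-u)) atTop (𝓝 0) := by
    simpa using Real.tendsto_exp_neg_atTop_nhds_zero
  have hp1 : Tendsto (fun u : ℝ => u * Real.exp (-u)) atTop (𝓝 0) := by
    simpa using tendsto_pow_mul_exp_neg_atTop_nhds_zero 1
  have hp2 : Tendsto (fun u : ℝ => u^2 * Real.exp (-u)) atTop (𝓝 0) := by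
    simpa using tendsto_pow_mul_exp_neg_atTop_nhds_zero 2
  have hnum : Tendsto (fun u : ℝ => (u^2 - 2*u) * Real.exp (-u) + 2*u * Real.exp (-2*u))
      atTop (𝓝 0) := by
    have h1 : Tendsto (fun u : ℝ => u^2 * Real.exp (-u) - 2 * (u * Real.exp (-u))
        + 2 * ((u * Real.exp (-u)) * Real.exp (-u))) atTop (𝓝 (0 - 2*0 + 2*(0*0))) :=
      (hp2.sub (hp1.const_mul 2)).add ((hp1.mul hx).const_mul 2)
    have : (0:ℝ) - 2*0 + 2*(0*0) = 0 := by norm_num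
    rw [this] at h1
    apply h1.congr
    intro u
    rw [exp_neg_two]
    ring
  have hden : Tendsto (fun u : ℝ => (1 - Real.exp (-u))^2) atTop (𝓝 1) := by
    have : Tendsto (fun u : ℝ => (1 - Real.exp (-u))^2) atTop (𝓝 ((1 - 0)^2)) :=
      (tendsto_const_nhds.sub hx).pow 2
    simpa using this
  have h := hnum.div hden one_ne_zero
  rw [zero_div] at h
  apply h.congr'
  filter_upwards [eventually_gt_atTop 0] with u hu
  exact (Fg_eq hu).symm

lemma Fg_tendsto_zero : Tendsto Fg (𝓝[>] (0:ℝ)) (𝓝 (-1)) := by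
  -- slope limits
  have hM : HasDerivAt (fun v : ℝ => (v - 2) * Real.exp (-v) + 2 * Real.exp (-2*v)) (-1) 0 := by
    have := hasDerivAt_M 0
    norm_num at this
    convert this using 1
    norm_num
  have hE : HasDerivAt (fun v : ℝ => 1 - Real.exp (-v)) 1 0 := by
    have := hasDerivAt_E 0
    norm_num at this
    exact this
  rw [hasDerivAt_iff_tendsto_slope] at hM hE
  have hsub : 𝓝[>] (0:ℝ) ≤ 𝓝[≠] (0:ℝ) :=
    nhdsWithin_mono 0 (fun x hx => ne_of_gt hx)
  have hM' := hM.mono_left hsub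
  have hE' := hE.mono_left hsub
  have hdiv := hM'.div (hE'.pow 2) (by norm_num : ((1:ℝ)^2) ≠ 0)
  have : (-1 : ℝ) / (1:ℝ)^2 = -1 := by norm_num
  rw [this] at hdiv
  apply hdiv.congr'
  filter_upwards [self_mem_nhdsWithin] with u (hu : 0 < u)
  have hu0 : u ≠ 0 := ne_of_gt hu
  have hne : 1 - Real.exp (-u) ≠ 0 := one_sub_exp_neg_ne hu
  rw [Fg_eq hu]
  simp only [Pi.div_apply, slope_def_field]
  norm_num
  field_simp

lemma Fg_continuousWithinAt : ContinuousWithinAt Fg (Set.Ici 0) 0 := by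
  rw [← continuousWithinAt_Ioi_iff_Ici]
  unfold ContinuousWithinAt
  have : Fg 0 = -1 := by simp [Fg]
  rw [this]
  exact Fg_tendsto_zero

theorem stmt_4 :
    IntegrableOn phi (Set.Ioi 0) ∧ ∫ u in Set.Ioi (0:ℝ), phi u = 1 := by
  refine ⟨phi_integrable, ?_⟩
  have h := integral_Ioi_of_hasDerivAt_of_tendsto Fg_continuousWithinAt
    (fun x hx => hasDerivAt_Fg hx) phi_integrable Fg_tendsto_atTop
  rw [h]
  simp [Fg]
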